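/- arXiv:math/0511718 — 5 statements merged into one kernel-verified Lean document; each statement's English description precedes it below -/
import Mathlib

section
/- Let h be holomorphic and univalent on the open unit disk with h(0) = 0 and h'(0) = 1, and suppose Re( z h'(z) / h(z) ) > 0 for all z ∈ Δ \ {0}. Then for every z ∈ Δ and every t ≥ 0, the point e^{-t} h(z) belongs to h(Δ). -/
open Complex Set Metric
open Filter Topology

theorem stmt4 (h : ℂ → ℂ)
    (hd : DifferentiableOn ℂ h (ball (0 : ℂ) 1))
    (hinj : Set.InjOn h (ball (0 : ℂ) 1))
    (h0 : h 0 = 0) (h1 : deriv h 0 = 1)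
    (hstar : ∀ z ∈ ball (0 : ℂ) 1, z ≠ 0 → 0 < (z * deriv h z / h z).re) :
    ∀ z ∈ ball (0 : ℂ) 1, ∀ t : ℝ, 0 ≤ t →
      Complex.exp (-(t : ℂ)) * h z ∈ h '' ball (0 : ℂ) 1 := by
  intro z hz T hT
  rcases eq_or_ne z 0 with rfl | hz0
  · exact ⟨0, by simpa using hz, by simp [h0]⟩
  -- basic facts
  have hzball : z ∈ ball (0:ℂ) 1 := hz
  have hr : ‖z‖ < 1 := by simpa [mem_ball, dist_eq_norm] using hz
  set r : ℝ := ‖z‖ with hrdef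
  have hhz : h z ≠ 0 := fun hc => hz0 (hinj hz (by simpa using (show (0:ℝ) < 1 by norm_num)) (by rw [hc, h0]))
  -- the set S
  set f : ℝ → ℂ := fun t => Complex.exp (-(t:ℂ)) * h z with hf
  have hfc : Continuous f := by
    continuity
  set S : Set ℝ := f ⁻¹' (h '' closedBall (0:ℂ) r) with hS
  have hsub : closedBall (0:ℂ) r ⊆ ball (0:ℂ) 1 := closedBall_subset_ball hr
  have hSclosed : IsClosed S := by
    apply IsClosed.preimage hfc
    exact ((isCompact_closedBall _ _).image_of_continuousOn (hd.continuousOn.mono hsub)).isClosed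
  have h0S : (0:ℝ) ∈ S := ⟨z, by simp [hrdef], by simp [hf]⟩
  -- analyticity / strict derivative
  have hana : ∀ w ∈ ball (0:ℂ) 1, HasStrictDerivAt h (deriv h w) w := by
    intro w hw
    obtain ⟨p, hp⟩ := hd.analyticAt ((isOpen_ball).mem_nhds hw)
    have hps := hp.hasStrictDerivAt
    rw [hps.hasDerivAt.deriv]; exact hps
  -- key: right-openness
  have key : ∀ t₀ ∈ S, ∃ ε > 0, ∀ t ∈ Ioo t₀ (t₀ + ε), t ∈ S := by
    intro t₀ ht₀
    obtain ⟨w₀, hw₀r, hw₀⟩ := ht₀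
    have hw₀r' : ‖w₀‖ ≤ r := by simpa [mem_closedBall, dist_eq_norm] using hw₀r
    have hw₀ball : w₀ ∈ ball (0:ℂ) 1 := hsub hw₀r
    have hfne : f t₀ ≠ 0 := mul_ne_zero (Complex.exp_ne_zero _) hhz
    have hw₀0 : w₀ ≠ 0 := by
      intro hc; rw [hc, h0] at hw₀; exact hfne hw₀.symm
    have hstar' := hstar w₀ hw₀ball hw₀0
    have hhw₀ : h w₀ ≠ 0 := by rw [hw₀]; exact hfne
    have hd0 : deriv h w₀ ≠ 0 := by
      intro hc; rw [hc] at hstar'; simp at hstar'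
    have hsd := hana w₀ hw₀ball
    -- local inverse
    set g := hsd.localInverse h (deriv h w₀) w₀ hd0 with hg
    have hright : ∀ᶠ y in 𝓝 (h w₀), h (g y) = y :=
      (hsd.hasStrictFDerivAt_equiv hd0).eventually_right_inverse
    have hgw : g (h w₀) = w₀ :=
      (hsd.hasStrictFDerivAt_equiv hd0).localInverse_apply_image
    have hgderiv : HasStrictDerivAt g (deriv h w₀)⁻¹ (h w₀) := hsd.to_localInverse hd0
    -- f is differentiable
    have hfd : HasDerivAt f (-(f t₀)) t₀ := by
      have : HasDerivAt (fun s : ℂ => Complex.exp (-s) * h z) (-(Complex.exp (-(t₀:ℂ)) * h z)) (t₀:ℂ) := by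
        have := ((Complex.hasDerivAt_exp (-(t₀:ℂ))).comp (t₀:ℂ) ((hasDerivAt_id (t₀:ℂ)).neg)).mul_const (h z)
        simpa [mul_comm, neg_mul] using this
      simpa [hf] using this.comp_ofReal
    -- w and its derivative
    set w : ℝ → ℂ := fun t => g (f t) with hw
    have hwd : HasDerivAt w ((-(f t₀)) • (deriv h w₀)⁻¹) t₀ := by
      have := HasDerivAt.scomp (𝕜 := ℝ) (𝕜' := ℂ) t₀ (by rw [hw₀] at hgderiv; exact hgderiv.hasDerivAt) hfd
      exact this
    have hwt₀ : w t₀ = w₀ := by rw [hw]; simp only [← hw₀]; exact hgw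
    -- φ = normSq ∘ w
    set φ : ℝ → ℝ := fun t => Complex.normSq (w t) with hφ
    set w' : ℂ := (-(f t₀)) • (deriv h w₀)⁻¹ with hw'
    have hφd : HasDerivAt φ (2 * ((starRingEnd ℂ) w₀ * w').re) t₀ := by
      have hre : HasDerivAt (fun t => (w t).re) w'.re t₀ := (Complex.reCLM.hasFDerivAt.comp_hasDerivAt t₀ hwd)
      have him : HasDerivAt (fun t => (w t).im) w'.im t₀ := (Complex.imCLM.hasFDerivAt.comp_hasDerivAt t₀ hwd)
      have := ((hre.mul hre).add (him.mul him))
      have h2 : HasDerivAt φ (w'.re * (w t₀).re + (w t₀).re * w'.re + (w'.im * (w t₀).im + (w t₀).im * w'.im)) t₀ := by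
        simp only [hφ, Complex.normSq_apply]; exact this
      convert h2 using 1
      rw [hwt₀] at h2 ⊢
      simp [Complex.mul_re, Complex.conj_re, Complex.conj_im]
      ring
    -- derivative is negative
    have hφneg : 2 * ((starRingEnd ℂ) w₀ * w').re < 0 := by
      have hkey : (starRingEnd ℂ) w₀ * w' = -(Complex.normSq w₀) * (w₀ * deriv h w₀ / h w₀)⁻¹ := by
        rw [hw', hw₀]
        field_simp [hd0, hhw₀, hw₀0]
        rw [Complex.normSq_eq_conj_mul_self]
        rw [smul_eq_mul, one_div, mul_comm (-f t₀), ← mul_assoc, mul_inv_cancel_right₀ hd0]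
        ring
      rw [hkey]
      have hinvre : 0 < ((w₀ * deriv h w₀ / h w₀)⁻¹).re := by
        rw [Complex.inv_re]
        exact div_pos hstar' (Complex.normSq_pos.2 (by
          intro hc; rw [hc] at hstar'; simp at hstar'))
      have hnsq : 0 < Complex.normSq w₀ := Complex.normSq_pos.2 hw₀0
      have : (-(Complex.normSq w₀ : ℂ) * (w₀ * deriv h w₀ / h w₀)⁻¹).re
          = -(Complex.normSq w₀) * ((w₀ * deriv h w₀ / h w₀)⁻¹).re := by
        simp [Complex.ofReal_mul, Complex.mul_re]
      rw [this]
      nlinarith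
    -- eventually: φ t < φ t₀ and h (w t) = f t for t slightly above t₀
    have hslope : Tendsto (slope φ t₀) (𝓝[>] t₀) (𝓝 (2 * ((starRingEnd ℂ) w₀ * w').re)) :=
      (hasDerivAt_iff_tendsto_slope.1 hφd).mono_left (nhdsWithin_mono _ (fun x hx => ne_of_gt hx))
    have hev1 : ∀ᶠ t in 𝓝[>] t₀, slope φ t₀ t < 0 :=
      hslope.eventually_lt_const hφneg
    have hev2 : ∀ᶠ t in 𝓝[>] t₀, h (w t) = f t := by
      have : ∀ᶠ t in 𝓝 t₀, h (w t) = f t := by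
        have hfc' : ContinuousAt f t₀ := hfc.continuousAt
        have := hfc'.preimage_mem_nhds (by rw [hw₀] at hright; exact hright)
        filter_upwards [this] with t ht
        exact ht
      exact this.filter_mono nhdsWithin_le_nhds
    have hfin : ∀ᶠ t in 𝓝[>] t₀, t ∈ S := by
      filter_upwards [hev1, hev2, self_mem_nhdsWithin] with t h1' h2' h3'
      have ht₀t : t₀ < t := h3'
      have : φ t < φ t₀ := by
        have := h1'
        rw [slope_def_field] at this
        have hpos : (0:ℝ) < t - t₀ := by linarith
        have := (div_neg_iff.1 this)
        rcases this with ⟨_, hc⟩ | ⟨hn, _⟩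
        · linarith
        · nlinarith
      refine ⟨w t, ?_, h2'⟩
      have hnt : Complex.normSq (w t) ≤ r ^ 2 := by
        have hφt₀ : φ t₀ ≤ r ^ 2 := by
          rw [hφ]; simp only [hwt₀]
          rw [← Complex.sq_norm]
          have habs : ‖w₀‖ ≤ r := hw₀r'
          nlinarith [norm_nonneg w₀]
        linarith [‹φ t < φ t₀›]
      have hn2 : ‖w t‖ ^ 2 ≤ r ^ 2 := by
        rw [Complex.sq_norm]; exact hnt
      have hr0 : (0:ℝ) ≤ r := by rw [hrdef]; positivity
      simp only [mem_closedBall, dist_eq_norm, sub_zero]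
      nlinarith [norm_nonneg (w t)]
    rw [eventually_nhdsWithin_iff] at hfin
    obtain ⟨ε, hε, hball⟩ := Metric.eventually_nhds_iff.1 hfin
    exact ⟨ε, hε, fun t ht => hball (by rw [Real.dist_eq]; rw [abs_lt]; constructor <;> [linarith [ht.1, ht.2]; linarith [ht.1, ht.2]]) ht.1⟩
  -- connectedness argument on [0, T]
  have hTS : T ∈ S := by
    by_contra hTn
    set A := S ∩ Icc 0 T with hA
    have hAne : A.Nonempty := ⟨0, h0S, le_refl _, hT⟩
    have hAbdd : BddAbove A := ⟨T, fun x hx => hx.2.2⟩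
    have hAclosed : IsClosed A := hSclosed.inter isClosed_Icc
    set u := sSup A with hu
    have huA : u ∈ A := hAclosed.csSup_mem hAne hAbdd
    have huT : u < T := lt_of_le_of_ne huA.2.2 (fun hc => hTn (hc ▸ huA.1))
    obtain ⟨ε, hε, hεS⟩ := key u huA.1
    set t' := min (u + ε / 2) ((u + T) / 2) with ht'
    have ht'1 : u < t' := by
      apply lt_min <;> linarith
    have ht'2 : t' < u + ε := by
      calc t' ≤ u + ε / 2 := min_le_left _ _
        _ < u + ε := by linarith
    have ht'T : t' ≤ T := by
      calc t' ≤ (u + T) / 2 := min_le_right _ _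
        _ ≤ T := by linarith
    have : t' ∈ A := ⟨hεS t' ⟨ht'1, ht'2⟩, le_trans huA.2.1 (le_of_lt ht'1), ht'T⟩
    exact absurd (le_csSup hAbdd this) (not_le.2 ht'1)
  obtain ⟨w, hwr, hwt⟩ := hTS
  exact ⟨w, hsub hwr, hwt⟩
end

section
/- Let σ be a Borel probability measure on the unit circle with σ({η}) = 0 for a fixed η with |η| = 1, and fix k ≥ 1. Then the limit of ∮_{∂Δ} conj(ζ)(z - η)/(1 - z·conj(ζ)) dσ(ζ) as z → η within the nontangential region D_{k,η} = { z ∈ Δ : |z - η| < k(1 - |z|) } is 0. -/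
open Complex Set Metric Filter MeasureTheory

/-- Nontangential approach region at a boundary point `η` with opening `k`. -/
def nt (η : ℂ) (k : ℝ) : Set ℂ :=
  {z : ℂ | ‖z‖ < 1 ∧ ‖z - η‖ < k * (1 - ‖z‖)}

theorem stmt12 (σ : Measure ℂ) [IsProbabilityMeasure σ]
    (η : ℂ) (hη : ‖η‖ = 1)
    (hcirc : ∀ᵐ ζ ∂σ, ‖ζ‖ = 1)
    (hση : σ {η} = 0) (k : ℝ) (hk : 1 ≤ k) :
    Tendsto (fun z : ℂ =>
        ∫ ζ, (starRingEnd ℂ) ζ * (z - η) / (1 - z * (starRingEnd ℂ) ζ) ∂σ)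
      (nhdsWithin η (nt η k)) (nhds 0) := by
  have hne : ∀ᵐ ζ ∂σ, ζ ≠ η := by
    rw [ae_iff]
    simpa using hση
  have h0 : Tendsto (fun z : ℂ =>
        ∫ ζ, (starRingEnd ℂ) ζ * (z - η) / (1 - z * (starRingEnd ℂ) ζ) ∂σ)
      (nhdsWithin η (nt η k)) (nhds (∫ _ : ℂ, (0:ℂ) ∂σ)) := by
    apply tendsto_integral_filter_of_dominated_convergence (fun _ => k)
    · filter_upwards with z
      apply Measurable.aestronglyMeasurable
      have hm : Measurable fun ζ : ℂ => (starRingEnd ℂ) ζ :=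
        Complex.continuous_conj.measurable
      exact ((hm.mul measurable_const).div
        (measurable_const.sub (measurable_const.mul hm)))
    · filter_upwards [self_mem_nhdsWithin] with z hz
      obtain ⟨hz1, hz2⟩ := hz
      filter_upwards [hcirc] with ζ hζ
      have hden : 1 - ‖z‖ ≤ ‖1 - z * (starRingEnd ℂ) ζ‖ := by
        calc 1 - ‖z‖ = ‖(1:ℂ)‖ - ‖z * (starRingEnd ℂ) ζ‖ := by
              simp [map_mul, Complex.norm_conj, hζ]
          _ ≤ ‖1 - z * (starRingEnd ℂ) ζ‖ := by
              have := norm_sub_norm_le (1:ℂ) (z * (starRingEnd ℂ) ζ)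
              simpa using this
      have hpos : 0 < 1 - ‖z‖ := by linarith
      rw [norm_div, norm_mul]
      simp only [Complex.norm_conj, hζ, one_mul]
      rw [div_le_iff₀ (lt_of_lt_of_le hpos hden)]
      calc ‖z - η‖ ≤ k * (1 - ‖z‖) := le_of_lt hz2
        _ ≤ k * ‖1 - z * (starRingEnd ℂ) ζ‖ := by
            apply mul_le_mul_of_nonneg_left hden (by linarith)
    · exact integrable_const k
    · filter_upwards [hcirc, hne] with ζ hζ hζη
      have hden : 1 - η * (starRingEnd ℂ) ζ ≠ 0 := by
        intro h
        apply hζη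
        have h1 : η * (starRingEnd ℂ) ζ = 1 := by linear_combination -h
        have h2 : (starRingEnd ℂ) ζ * ζ = 1 := by
          rw [mul_comm, Complex.mul_conj]
          norm_cast
          rw [← Complex.sq_norm, hζ]; norm_num
        have : η * ((starRingEnd ℂ) ζ * ζ) = ζ := by
          rw [← mul_assoc, h1, one_mul]
        rw [h2, mul_one] at this
        exact this.symm
      have hc : ContinuousAt (fun z : ℂ =>
          (starRingEnd ℂ) ζ * (z - η) / (1 - z * (starRingEnd ℂ) ζ)) η := by
        apply ContinuousAt.div
        · fun_prop
        · fun_prop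
        · simpa using hden
      have := hc.tendsto.mono_left (nhdsWithin_le_nhds (s := nt η k))
      simpa using this
  simpa using h0
end

section
/- Let τ ∈ closure(Δ), η on the unit circle with η ≠ τ, a ∈ (0,1], C ≠ 0, and let σ be a probability measure on the unit circle with σ({η}) = 0. Define h(z) = C(z-τ)(1 - z·conj(τ))(1 - z·conj(η))^{-2a} · exp( -2(1-a) ∮ log(1 - z·conj(ζ)) dσ(ζ) ). Then the angular limit ∠lim_{z→η} (z-η) h'(z)/h(z) exists and equals -2a. -/
open Complex Set Metric Filter MeasureTheory

/-- Angular (nontangential) limit of `g` at the boundary point `η`. -/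
def AngLim (g : ℂ → ℂ) (η L : ℂ) : Prop :=
  ∀ k : ℝ, 1 ≤ k → Tendsto g (nhdsWithin η (nt η k)) (nhds L)

private lemma oneSub_ne {z w : ℂ} (hz : ‖z‖ < 1) (hw : ‖w‖ ≤ 1) :
    1 - z * w ≠ 0 := by
  intro h
  have h1 : z * w = 1 := by linear_combination -h
  have h2 := norm_mul z w
  rw [h1] at h2
  simp at h2
  nlinarith [norm_nonneg w, norm_nonneg z]

private lemma oneSub_slit {z w : ℂ} (hz : ‖z‖ < 1) (hw : ‖w‖ ≤ 1) :
    1 - z * w ∈ Complex.slitPlane := by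
  refine Or.inl ?_
  have h1 : (z * w).re ≤ ‖z * w‖ := Complex.re_le_norm _
  have h2 : ‖z * w‖ = ‖z‖ * ‖w‖ := norm_mul _ _
  have h3 : (1 - z * w).re = 1 - (z * w).re := by simp
  nlinarith [norm_nonneg z]

private lemma oneSub_abs {z w : ℂ} (hw : ‖w‖ ≤ 1) :
    1 - ‖z‖ ≤ ‖1 - z * w‖ := by
  have h := norm_sub_norm_le (1 : ℂ) (z * w)
  simp only [norm_one, norm_mul] at h
  nlinarith [norm_nonneg z, norm_nonneg w]

private lemma unit_ne {η ζ : ℂ} (hη : ‖η‖ = 1) (hζ : ‖ζ‖ = 1)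
    (h : ζ ≠ η) : 1 - η * (starRingEnd ℂ) ζ ≠ 0 := by
  intro h0
  apply h
  have hζ0 : ζ ≠ 0 := by intro h'; rw [h'] at hζ; simp at hζ
  have h1 : η * (starRingEnd ℂ) ζ = 1 := by linear_combination -h0
  have h2 : ζ * (starRingEnd ℂ) ζ = 1 := by
    rw [Complex.mul_conj]
    norm_cast
    rw [Complex.normSq_eq_norm_sq, hζ]; norm_num
  have hc : (starRingEnd ℂ) ζ ≠ 0 := by simpa using hζ0
  have h3 : η * (starRingEnd ℂ) ζ = ζ * (starRingEnd ℂ) ζ := by rw [h1, h2]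
  exact (mul_right_cancel₀ hc h3).symm

private lemma norm_log_le {w : ℂ} {δ : ℝ} (hδ : 0 < δ) (h1 : δ ≤ ‖w‖)
    (h2 : ‖w‖ ≤ 2) :
    ‖Complex.log w‖ ≤ |Real.log δ| + Real.log 2 + Real.pi := by
  have hre : |(Complex.log w).re| = |Real.log (‖w‖)| := by rw [Complex.log_re]
  have him : |(Complex.log w).im| ≤ Real.pi := by
    rw [Complex.log_im]; exact Complex.abs_arg_le_pi w
  have hl2 : (0:ℝ) ≤ Real.log 2 := Real.log_nonneg (by norm_num)
  have h3 : |Real.log (‖w‖)| ≤ |Real.log δ| + Real.log 2 := by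
    rw [abs_le]
    constructor
    · have hlo := Real.log_le_log hδ h1
      have := neg_abs_le (Real.log δ)
      linarith
    · have hhi := Real.log_le_log (lt_of_lt_of_le hδ h1) h2
      have := abs_nonneg (Real.log δ)
      linarith
  calc ‖Complex.log w‖ ≤ |(Complex.log w).re| + |(Complex.log w).im| :=
        Complex.norm_le_abs_re_add_abs_im _
    _ ≤ |Real.log δ| + Real.log 2 + Real.pi := by rw [hre]; linarith

private lemma hasDeriv_F (σ : Measure ℂ) [IsProbabilityMeasure σ]
    (hcirc : ∀ᵐ ζ ∂σ, ‖ζ‖ = 1) {z : ℂ} (hz : ‖z‖ < 1) :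
    HasDerivAt (fun z => ∫ ζ, Complex.log (1 - z * (starRingEnd ℂ) ζ) ∂σ)
      (∫ ζ, (1 - z * (starRingEnd ℂ) ζ)⁻¹ * (-(starRingEnd ℂ) ζ) ∂σ) z := by
  have hc : Measurable (fun ζ : ℂ => (starRingEnd ℂ) ζ) := (RCLike.continuous_conj).measurable
  set ε : ℝ := (1 - ‖z‖) / 2 with hε
  have hεpos : 0 < ε := by have := norm_nonneg z; simp only [hε]; linarith
  have key : ∀ x ∈ ball z ε, ‖x‖ ≤ 1 - ε := by
    intro x hx
    have hd : ‖x - z‖ < ε := by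
      rw [mem_ball, Complex.dist_eq] at hx; exact hx
    have h1 : ‖x‖ ≤ ‖x - z‖ + ‖z‖ := by
      simpa using norm_add_le (x - z) z
    simp only [hε] at hd ⊢
    linarith
  have hεlt : 1 - ε < 1 := by linarith
  set M : ℝ := |Real.log ε| + Real.log 2 + Real.pi with hM
  refine (hasDerivAt_integral_of_dominated_loc_of_deriv_le (hs := ball_mem_nhds z hεpos)
      (bound := fun _ => ε⁻¹)
      (F := fun z ζ => Complex.log (1 - z * (starRingEnd ℂ) ζ))
      (F' := fun z ζ => (1 - z * (starRingEnd ℂ) ζ)⁻¹ * (-(starRingEnd ℂ) ζ))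
      ?_ ?_ ?_ ?_ ?_ ?_).2
  · filter_upwards with x
    exact (Complex.measurable_log.comp (by fun_prop)).aestronglyMeasurable
  · -- integrability of F z
    refine (integrable_const (M : ℝ)).mono' ?_ ?_
    · exact (Complex.measurable_log.comp (by fun_prop)).aestronglyMeasurable
    · filter_upwards [hcirc] with ζ hζ
      have hw1 : 1 - ‖z‖ ≤ ‖1 - z * (starRingEnd ℂ) ζ‖ :=
        oneSub_abs (by simp [hζ])
      have hw2 : ‖1 - z * (starRingEnd ℂ) ζ‖ ≤ 2 := by
        have := norm_sub_le (1 : ℂ) (z * (starRingEnd ℂ) ζ)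
        simp only [norm_one, norm_mul] at this
        have habs : ‖(starRingEnd ℂ) ζ‖ = 1 := by simp [hζ]
        rw [habs] at this
        nlinarith [norm_nonneg z]
      have hεle : ε ≤ ‖1 - z * (starRingEnd ℂ) ζ‖ := by
        simp only [hε] at *; linarith
      have := norm_log_le hεpos hεle hw2
      simpa [hM] using this
  · exact ((by fun_prop : Measurable fun ζ : ℂ =>
      (1 - z * (starRingEnd ℂ) ζ)⁻¹ * (-(starRingEnd ℂ) ζ))).aestronglyMeasurable
  · -- bound on derivative
    filter_upwards [hcirc] with ζ hζ
    intro x hx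
    have hx1 : ‖x‖ ≤ 1 - ε := key x hx
    have hw1 : 1 - ‖x‖ ≤ ‖1 - x * (starRingEnd ℂ) ζ‖ :=
      oneSub_abs (by simp [hζ])
    have hpos : (0:ℝ) < ‖1 - x * (starRingEnd ℂ) ζ‖ := by linarith
    have habs : ‖(starRingEnd ℂ) ζ‖ = 1 := by simp [hζ]
    rw [norm_mul, norm_neg, habs, norm_inv, mul_one]
    exact inv_anti₀ hεpos (by simp only [hε] at *; linarith)
  · exact integrable_const _
  · -- differentiability
    filter_upwards [hcirc] with ζ hζ
    intro x hx
    have hx1 : ‖x‖ < 1 := lt_of_le_of_lt (key x hx) hεlt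
    have hslit : 1 - x * (starRingEnd ℂ) ζ ∈ Complex.slitPlane :=
      oneSub_slit hx1 (by simp [hζ])
    have hinner : HasDerivAt (fun x : ℂ => 1 - x * (starRingEnd ℂ) ζ)
        (-(starRingEnd ℂ) ζ) x := by
      simpa using ((hasDerivAt_id x).mul_const ((starRingEnd ℂ) ζ)).const_sub 1
    exact (Complex.hasDerivAt_log hslit).comp x hinner

set_option maxHeartbeats 1000000 in
theorem stmt13 (τ η : ℂ) (hτ : τ ∈ closure (ball (0 : ℂ) 1))
    (hη : ‖η‖ = 1) (hne : η ≠ τ)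
    (a : ℝ) (ha0 : 0 < a) (ha1 : a ≤ 1) (C : ℂ) (hC : C ≠ 0)
    (σ : Measure ℂ) [IsProbabilityMeasure σ]
    (hcirc : ∀ᵐ ζ ∂σ, ‖ζ‖ = 1) (hση : σ {η} = 0)
    (h : ℂ → ℂ)
    (hh : ∀ z, h z = C * (z - τ) * (1 - z * (starRingEnd ℂ) τ) *
        (1 - z * (starRingEnd ℂ) η) ^ (((-2 * a : ℝ) : ℂ)) *
        Complex.exp (-2 * (1 - (a : ℂ)) *
          ∫ ζ, Complex.log (1 - z * (starRingEnd ℂ) ζ) ∂σ)) :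
    AngLim (fun z => (z - η) * deriv h z / h z) η ((-2 * a : ℝ) : ℂ) := by
  have hcm : Measurable (fun ζ : ℂ => (starRingEnd ℂ) ζ) := (RCLike.continuous_conj).measurable
  have hτ1 : ‖τ‖ ≤ 1 := by
    rw [closure_ball (0 : ℂ) one_ne_zero, mem_closedBall, dist_zero_right] at hτ
    exact hτ
  set c : ℂ := ((-2 * a : ℝ) : ℂ) with hcdef
  set b : ℂ := -2 * (1 - (a : ℂ)) with hbdef
  set F : ℂ → ℂ := fun z => ∫ ζ, Complex.log (1 - z * (starRingEnd ℂ) ζ) ∂σ with hFdef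
  set G : ℂ → ℂ :=
    fun z => ∫ ζ, (1 - z * (starRingEnd ℂ) ζ)⁻¹ * (-(starRingEnd ℂ) ζ) ∂σ with hGdef
  set Ef : ℂ → ℂ :=
    fun z => Complex.log (1 - z * (starRingEnd ℂ) η) * c + b * F z with hEfdef
  set H : ℂ → ℂ := fun z => C * (z - τ) * (1 - z * (starRingEnd ℂ) τ) *
      Complex.exp (Ef z) with hHdef
  have hconjη : ‖(starRingEnd ℂ) η‖ = 1 := by simp [hη]
  have hηη : η * (starRingEnd ℂ) η = 1 := by
    rw [Complex.mul_conj]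
    norm_cast
    rw [Complex.normSq_eq_norm_sq, hη]; norm_num
  have hEq : ∀ w, 1 - w * (starRingEnd ℂ) η ≠ 0 → h w = H w := by
    intro w h0
    rw [hh w]
    simp only [hHdef, hEfdef, hFdef, hbdef]
    rw [Complex.cpow_def_of_ne_zero h0, Complex.exp_add]
    ring
  have hUopen : IsOpen {w : ℂ | 1 - w * (starRingEnd ℂ) η ≠ 0} := by
    have hcont : Continuous fun w : ℂ => 1 - w * (starRingEnd ℂ) η := by continuity
    exact isOpen_compl_singleton.preimage hcont
  -- derivative of h at interior points
  have hDeriv : ∀ z : ℂ, ‖z‖ < 1 →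
      HasDerivAt h
        ((C * 1 * (1 - z * (starRingEnd ℂ) τ) + C * (z - τ) * -(1 * (starRingEnd ℂ) τ)) *
            Complex.exp (Ef z) +
          C * (z - τ) * (1 - z * (starRingEnd ℂ) τ) *
            (Complex.exp (Ef z) *
              ((1 - z * (starRingEnd ℂ) η)⁻¹ * -(1 * (starRingEnd ℂ) η) * c + b * G z))) z := by
    intro z hz
    have hzη : 1 - z * (starRingEnd ℂ) η ≠ 0 := oneSub_ne hz (le_of_eq hconjη)
    have hinner : HasDerivAt (fun w : ℂ => 1 - w * (starRingEnd ℂ) η)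
        (-(1 * (starRingEnd ℂ) η)) z :=
      ((hasDerivAt_id z).mul_const _).const_sub 1
    have hslit : 1 - z * (starRingEnd ℂ) η ∈ Complex.slitPlane :=
      oneSub_slit hz (le_of_eq hconjη)
    have hlog : HasDerivAt (fun w : ℂ => Complex.log (1 - w * (starRingEnd ℂ) η))
        ((1 - z * (starRingEnd ℂ) η)⁻¹ * -(1 * (starRingEnd ℂ) η)) z := by
      exact (Complex.hasDerivAt_log hslit).comp z hinner
    have hFd : HasDerivAt F (G z) z := hasDeriv_F σ hcirc hz
    have hEd : HasDerivAt Ef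
        ((1 - z * (starRingEnd ℂ) η)⁻¹ * -(1 * (starRingEnd ℂ) η) * c + b * G z) z :=
      (hlog.mul_const c).add (hFd.const_mul b)
    have hA : HasDerivAt (fun w : ℂ => C * (w - τ)) (C * 1) z :=
      ((hasDerivAt_id z).sub_const τ).const_mul C
    have hB : HasDerivAt (fun w : ℂ => 1 - w * (starRingEnd ℂ) τ)
        (-(1 * (starRingEnd ℂ) τ)) z :=
      ((hasDerivAt_id z).mul_const _).const_sub 1
    have hH' : HasDerivAt H _ z := (hA.mul hB).mul hEd.cexp
    refine hH'.congr_of_eventuallyEq ?_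
    refine Filter.eventuallyEq_of_mem (hUopen.mem_nhds hzη) ?_
    intro w hw
    exact hEq w hw
  intro k hk
  set l := nhdsWithin η (nt η k) with hldef
  have hl_le : l ≤ nhds η := nhdsWithin_le_nhds
  have hητ : η - τ ≠ 0 := sub_ne_zero.mpr hne
  have h1τ : 1 - η * (starRingEnd ℂ) τ ≠ 0 := by
    rcases lt_or_eq_of_le hτ1 with hlt | heq
    · intro h0
      have h0' := congrArg (starRingEnd ℂ) h0
      simp only [map_sub, map_one, map_mul, Complex.conj_conj, map_zero] at h0'
      exact oneSub_ne hlt (le_of_eq hconjη) (by linear_combination h0')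
    · exact unit_ne hη heq (Ne.symm hne)
  -- limit of the model function
  set f : ℂ → ℂ := fun z => (z - η) / (z - τ) +
      (z - η) * -(1 * (starRingEnd ℂ) τ) / (1 - z * (starRingEnd ℂ) τ) + c +
      b * ((z - η) * G z) with hfdef
  have haene : ∀ᵐ ζ ∂σ, ζ ≠ η := by
    rw [ae_iff]
    simpa using hση
  have t3 : Tendsto (fun z => (z - η) * G z) l (nhds 0) := by
    have hrw : ∀ z : ℂ, (z - η) * G z =
        ∫ ζ, (z - η) * ((1 - z * (starRingEnd ℂ) ζ)⁻¹ * (-(starRingEnd ℂ) ζ)) ∂σ := by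
      intro z
      rw [hGdef]
      exact (integral_const_mul _ _).symm
    simp only [hrw]
    have key : Tendsto
        (fun z => ∫ ζ, (z - η) * ((1 - z * (starRingEnd ℂ) ζ)⁻¹ * (-(starRingEnd ℂ) ζ)) ∂σ)
        l (nhds (∫ _, (0 : ℂ) ∂σ)) := by
      refine tendsto_integral_filter_of_dominated_convergence (fun _ => k) ?_ ?_ ?_ ?_
      · filter_upwards with z
        exact (by fun_prop : Measurable fun ζ : ℂ =>
          (z - η) * ((1 - z * (starRingEnd ℂ) ζ)⁻¹ * (-(starRingEnd ℂ) ζ))).aestronglyMeasurable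
      · filter_upwards [eventually_mem_nhdsWithin] with z hz
        filter_upwards [hcirc] with ζ hζ
        have hz1 : ‖z‖ < 1 := hz.1
        have hz2 : ‖z - η‖ < k * (1 - ‖z‖) := hz.2
        have hcζ : ‖(starRingEnd ℂ) ζ‖ = 1 := by simp [hζ]
        have hw1 : 1 - ‖z‖ ≤ ‖1 - z * (starRingEnd ℂ) ζ‖ :=
          oneSub_abs (le_of_eq hcζ)
        have hpos : (0 : ℝ) < 1 - ‖z‖ := by linarith
        have hpos2 : (0 : ℝ) < ‖1 - z * (starRingEnd ℂ) ζ‖ := by linarith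
        rw [norm_mul, norm_mul, norm_neg, hcζ, norm_inv, mul_one]
        have hle : (‖1 - z * (starRingEnd ℂ) ζ‖)⁻¹ ≤ (1 - ‖z‖)⁻¹ :=
          inv_anti₀ hpos hw1
        calc ‖z - η‖ * (‖1 - z * (starRingEnd ℂ) ζ‖)⁻¹
            ≤ (k * (1 - ‖z‖)) * (1 - ‖z‖)⁻¹ := by
              apply mul_le_mul (le_of_lt hz2) hle (by positivity)
              nlinarith [norm_nonneg (z - η)]
          _ = k := by field_simp
      · exact integrable_const _
      · filter_upwards [hcirc, haene] with ζ hζ hζη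
        have hden : 1 - η * (starRingEnd ℂ) ζ ≠ 0 := unit_ne hη hζ hζη
        have hca : ContinuousAt
            (fun z : ℂ => (z - η) * ((1 - z * (starRingEnd ℂ) ζ)⁻¹ * (-(starRingEnd ℂ) ζ)))
            η := by
          refine (continuousAt_id.sub continuousAt_const).mul ?_
          refine ContinuousAt.mul ?_ continuousAt_const
          exact ((continuousAt_const.sub (continuousAt_id.mul continuousAt_const)).inv₀ hden)
        have := (hca.tendsto).mono_left hl_le
        simpa using this
    simpa using key
  have t1 : Tendsto (fun z : ℂ => (z - η) / (z - τ)) (nhds η) (nhds 0) := by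
    have hca : ContinuousAt (fun z : ℂ => (z - η) / (z - τ)) η :=
      (continuousAt_id.sub continuousAt_const).div
        (continuousAt_id.sub continuousAt_const) hητ
    simpa using hca.tendsto
  have t2 : Tendsto (fun z : ℂ => (z - η) * -(1 * (starRingEnd ℂ) τ) /
      (1 - z * (starRingEnd ℂ) τ)) (nhds η) (nhds 0) := by
    have hca : ContinuousAt (fun z : ℂ => (z - η) * -(1 * (starRingEnd ℂ) τ) /
        (1 - z * (starRingEnd ℂ) τ)) η := by
      refine ContinuousAt.div ?_ ?_ h1τ
      · exact (continuousAt_id.sub continuousAt_const).mul continuousAt_const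
      · exact continuousAt_const.sub (continuousAt_id.mul continuousAt_const)
    simpa using hca.tendsto
  have tf : Tendsto f l (nhds c) := by
    have h0 := (((t1.mono_left hl_le).add (t2.mono_left hl_le)).add
      (tendsto_const_nhds (x := c))).add ((tendsto_const_nhds (x := b)).mul t3)
    rw [hfdef]
    simpa only [zero_add, add_zero, mul_zero] using h0
  refine tf.congr' ?_
  have hτopen : {x : ℂ | x ≠ τ} ∈ nhds η := isOpen_ne.mem_nhds hne
  filter_upwards [eventually_mem_nhdsWithin, hl_le hτopen] with z hz hzτ
  have hz1 : ‖z‖ < 1 := hz.1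
  have hzη' : 1 - z * (starRingEnd ℂ) η ≠ 0 := oneSub_ne hz1 (le_of_eq hconjη)
  have hzτ' : 1 - z * (starRingEnd ℂ) τ ≠ 0 := oneSub_ne hz1 (by simpa using hτ1)
  have hzη : z ≠ η := by
    intro h'
    rw [h', hη] at hz1
    exact lt_irrefl _ hz1
  have hzηsub : z - η ≠ 0 := sub_ne_zero.mpr hzη
  have hzτsub : z - τ ≠ 0 := sub_ne_zero.mpr hzτ
  have hηc : (starRingEnd ℂ) η ≠ 0 := by
    simp only [ne_eq, map_eq_zero]
    intro h'
    rw [h'] at hη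
    simp at hη
  have hkey : (z - η) * -(1 * (starRingEnd ℂ) η) = 1 - z * (starRingEnd ℂ) η := by
    linear_combination hηη
  have hcollapse : (1 - z * (starRingEnd ℂ) η)⁻¹ * -(1 * (starRingEnd ℂ) η) = (z - η)⁻¹ := by
    rw [← hkey, mul_inv, mul_assoc, inv_mul_cancel₀ (by simpa using hηc), mul_one]
  rw [hfdef]
  dsimp only
  rw [(hDeriv z hz1).deriv, hEq z hzη', hHdef]
  dsimp only
  rw [hcollapse]
  have hXne : Complex.exp (Ef z) ≠ 0 := Complex.exp_ne_zero _
  field_simp [hC, hzηsub, hzτsub, hzτ', hXne]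
  ring
end

section
/- Let f be holomorphic on the open unit disk, h holomorphic and injective on Δ with h'(z) f(z) = μ h(z) for all z ∈ Δ and some μ with Re μ > 0, and suppose that for every w ∈ h(Δ) and t ≥ 0 one has e^{-μ t} w ∈ h(Δ). Define F_t(z) = h^{-1}(e^{-μ t} h(z)). Then {F_t}_{t≥0} is a semiflow on Δ: F_0 = id, F_t ∘ F_s = F_{t+s} for t,s ≥ 0, each F_t is holomorphic Δ → Δ, and ∂F_t(z)/∂t + f(F_t(z)) = 0. -/
open Complex Set Metric Function Filter Topology Real

/-- An injective analytic function on an open set has nonvanishing derivative. -/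
lemma aux_deriv_ne_zero_of_injOn {h : ℂ → ℂ} {U : Set ℂ} (hU : IsOpen U)
    (hA : AnalyticOnNhd ℂ h U) (hinj : Set.InjOn h U) {z₀ : ℂ} (hz₀ : z₀ ∈ U) :
    deriv h z₀ ≠ 0 := by
  intro hd0
  have hφ : AnalyticAt ℂ (fun z => h z - h z₀) z₀ := (hA z₀ hz₀).sub analyticAt_const
  have hne : ¬ ∀ᶠ z in 𝓝 z₀, h z - h z₀ = 0 := by
    intro hev
    have h2 : ∀ᶠ z in 𝓝[≠] z₀, (h z - h z₀ = 0 ∧ z ∈ U) :=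
      (hev.and (hU.eventually_mem hz₀)).filter_mono nhdsWithin_le_nhds
    obtain ⟨z, ⟨hz1, hz2⟩, hzne⟩ := (h2.and eventually_mem_nhdsWithin).exists
    exact hzne (hinj hz2 hz₀ (sub_eq_zero.mp hz1))
  obtain ⟨n, g, hg, hg0, heq⟩ := hφ.exists_eventuallyEq_pow_smul_nonzero_iff.mpr hne
  have hn2 : 2 ≤ n := by
    by_contra hlt
    push_neg at hlt
    interval_cases n
    · exact hg0 (by simpa using heq.self_of_nhds.symm)
    · have hrhs : HasDerivAt (fun z => (z - z₀) ^ 1 • g z) (g z₀) z₀ := by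
        have := ((hasDerivAt_id z₀).sub_const z₀).fun_mul hg.differentiableAt.hasDerivAt
        simpa using this
      have hd1 : HasDerivAt (fun z => h z - h z₀) (g z₀) z₀ :=
        hrhs.congr_of_eventuallyEq heq
      have hd2 : HasDerivAt (fun z => h z - h z₀) 0 z₀ := by
        have := (hA z₀ hz₀).differentiableAt.hasDerivAt.sub_const (h z₀)
        rwa [hd0] at this
      exact hg0 (hd1.unique hd2)
  have hn0 : (n : ℂ) ≠ 0 := Nat.cast_ne_zero.mpr (by omega)
  -- an analytic n-th root of g near z₀
  set r : ℂ → ℂ := fun z =>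
    Complex.exp ((Complex.log (g z₀) + Complex.log (g z / g z₀)) / n) with hrdef
  have hrA : AnalyticAt ℂ r z₀ := by
    apply AnalyticAt.cexp
    apply AnalyticAt.div _ analyticAt_const hn0
    apply AnalyticAt.add analyticAt_const
    apply AnalyticAt.clog (hg.div analyticAt_const hg0)
    rw [Pi.div_apply, div_self hg0]
    exact Complex.one_mem_slitPlane
  have hr0 : r z₀ ≠ 0 := Complex.exp_ne_zero _
  have hev1 : ∀ᶠ z in 𝓝 z₀, g z ≠ 0 := by
    have : ContinuousAt g z₀ := hg.continuousAt
    exact this.eventually_ne hg0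
  have hroot : ∀ᶠ z in 𝓝 z₀, r z ^ n = g z := by
    filter_upwards [hev1] with z hz
    rw [hrdef]
    rw [← Complex.exp_nat_mul, mul_div_cancel₀ _ hn0, Complex.exp_add,
      Complex.exp_log hg0, Complex.exp_log (div_ne_zero hz hg0)]
    field_simp
  -- ψ z = (z - z₀) * r z ; then h z - h z₀ = ψ z ^ n near z₀
  set ψ : ℂ → ℂ := fun z => (z - z₀) * r z with hψdef
  have hψd : HasStrictDerivAt ψ (r z₀) z₀ := by
    obtain ⟨p, hp⟩ := hrA
    have h1 : HasStrictDerivAt (fun z : ℂ => z - z₀) 1 z₀ :=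
      (hasStrictDerivAt_id z₀).sub_const z₀
    have := h1.fun_mul hp.hasStrictDerivAt
    simpa using this
  have hψ0 : ψ z₀ = 0 := by simp [hψdef]
  have Φ := hψd.hasStrictFDerivAt_equiv hr0
  set ℓ : ℂ → ℂ := Φ.localInverse _ _ _ with hℓdef
  have hrinv : ∀ᶠ w in 𝓝 (0 : ℂ), ψ (ℓ w) = w := by
    have := Φ.eventually_right_inverse; rwa [hψ0] at this
  have hℓ0 : ℓ 0 = z₀ := by
    have := Φ.localInverse_apply_image; rwa [hψ0] at this
  have hℓt : Tendsto ℓ (𝓝 0) (𝓝 z₀) := by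
    have h1 : ContinuousAt ℓ (ψ z₀) := Φ.localInverse_continuousAt
    rw [hψ0] at h1
    have h2 : Tendsto ℓ (𝓝 0) (𝓝 (ℓ 0)) := h1
    rwa [hℓ0] at h2
  have Hv : ∀ᶠ z in 𝓝 z₀, (h z - h z₀ = ψ z ^ n ∧ z ∈ U) := by
    filter_upwards [heq, hroot, hU.eventually_mem hz₀] with z e1 e2 e3
    refine ⟨?_, e3⟩
    rw [e1, smul_eq_mul, ← e2, ← mul_pow]
  -- the n-th root of unity
  set ζ : ℂ := Complex.exp (2 * π * I / n) with hζdef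
  have h2πI : (2 * π * I : ℂ) ≠ 0 := by
    simp [Real.pi_ne_zero, Complex.I_ne_zero]
  have hζn : ζ ^ n = 1 := by
    rw [hζdef, ← Complex.exp_nat_mul, mul_div_cancel₀ _ hn0, Complex.exp_two_pi_mul_I]
  have hζ1 : ζ ≠ 1 := by
    intro hζ
    obtain ⟨k, hk⟩ := Complex.exp_eq_one_iff.mp (hζdef ▸ hζ)
    rw [div_eq_iff hn0] at hk
    have hk' : (1 : ℂ) * (2 * π * I) = ((k : ℂ) * n) * (2 * π * I) := by
      linear_combination hk
    have h2 : ((k * n : ℤ) : ℂ) = ((1 : ℤ) : ℂ) := by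
      push_cast
      exact (mul_right_cancel₀ h2πI hk'.symm)
    have h3 : (k * (n : ℤ) : ℤ) = 1 := by exact_mod_cast h2
    have hdvd : (n : ℤ) ∣ 1 := ⟨k, by rw [← h3]; ring⟩
    have := Int.le_of_dvd one_pos hdvd
    have : (2 : ℤ) ≤ (n : ℤ) := by exact_mod_cast hn2
    omega
  have hζcont : Tendsto (fun w : ℂ => ζ * w) (𝓝 0) (𝓝 0) := by
    have := (continuous_mul_left ζ).tendsto (0 : ℂ)
    simpa using this
  have hA1 : ∀ᶠ w in 𝓝 (0 : ℂ),
      ψ (ℓ w) = w ∧ (h (ℓ w) - h z₀ = ψ (ℓ w) ^ n ∧ ℓ w ∈ U) :=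
    hrinv.and (hℓt.eventually Hv)
  have key := (hA1.and (hζcont.eventually hA1)).filter_mono
    (nhdsWithin_le_nhds (s := {(0 : ℂ)}ᶜ))
  obtain ⟨w, ⟨⟨hw1, hw2, hw3⟩, ⟨hv1, hv2, hv3⟩⟩, hwne⟩ :=
    (key.and eventually_mem_nhdsWithin).exists
  have hwne' : w ≠ 0 := hwne
  have e1 : h (ℓ w) - h z₀ = w ^ n := by rw [hw2, hw1]
  have e2 : h (ℓ (ζ * w)) - h z₀ = w ^ n := by
    rw [hv2, hv1, mul_pow, hζn, one_mul]
  have hh12 : h (ℓ w) = h (ℓ (ζ * w)) := sub_left_inj.mp (e1.trans e2.symm)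
  have hll : ℓ w = ℓ (ζ * w) := hinj hw3 hv3 hh12
  have hwz : w = ζ * w := by
    calc w = ψ (ℓ w) := hw1.symm
    _ = ψ (ℓ (ζ * w)) := by rw [hll]
    _ = ζ * w := hv1
  have : (1 : ℂ) * w = ζ * w := by rw [one_mul, ← hwz]
  exact hζ1 (mul_right_cancel₀ hwne' this).symm

/-- The local inverse `invFunOn` of an injective analytic function is strictly
differentiable. -/
lemma aux_invFunOn_hasStrictDerivAt {h : ℂ → ℂ} {U : Set ℂ} (hU : IsOpen U)
    (hA : AnalyticOnNhd ℂ h U) (hinj : Set.InjOn h U) {z₀ : ℂ} (hz₀ : z₀ ∈ U) :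
    HasStrictDerivAt (Function.invFunOn h U) (deriv h z₀)⁻¹ (h z₀) := by
  have hd : HasStrictDerivAt h (deriv h z₀) z₀ := by
    obtain ⟨p, hp⟩ := hA z₀ hz₀
    have := hp.hasStrictDerivAt
    rwa [hp.hasDerivAt.deriv]
  have hne : deriv h z₀ ≠ 0 := aux_deriv_ne_zero_of_injOn hU hA hinj hz₀
  have hg : ∀ᶠ z in 𝓝 z₀, Function.invFunOn h U (h z) = z :=
    (hU.eventually_mem hz₀).mono fun z hz =>
      hinj (invFunOn_apply_mem hz) hz (invFunOn_apply_eq hz)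
  exact hd.to_local_left_inverse hne hg

theorem stmt17 (f h : ℂ → ℂ) (μ : ℂ) (hμ : 0 < μ.re)
    (hf : DifferentiableOn ℂ f (ball (0 : ℂ) 1))
    (hh : DifferentiableOn ℂ h (ball (0 : ℂ) 1))
    (hinj : Set.InjOn h (ball (0 : ℂ) 1))
    (hode : ∀ z ∈ ball (0 : ℂ) 1, deriv h z * f z = μ * h z)
    (hspir : ∀ w ∈ h '' ball (0 : ℂ) 1, ∀ t : ℝ, 0 ≤ t →
      Complex.exp (-(μ * (t : ℂ))) * w ∈ h '' ball (0 : ℂ) 1)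
    (F : ℝ → ℂ → ℂ)
    (hF : ∀ (t : ℝ) (z : ℂ), F t z =
      Function.invFunOn h (ball (0 : ℂ) 1) (Complex.exp (-(μ * (t : ℂ))) * h z)) :
    (∀ z ∈ ball (0 : ℂ) 1, F 0 z = z) ∧
    (∀ t s : ℝ, 0 ≤ t → 0 ≤ s → ∀ z ∈ ball (0 : ℂ) 1, F t (F s z) = F (t + s) z) ∧
    (∀ t : ℝ, 0 ≤ t → Set.MapsTo (F t) (ball (0 : ℂ) 1) (ball (0 : ℂ) 1) ∧
      DifferentiableOn ℂ (F t) (ball (0 : ℂ) 1)) ∧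
    (∀ z ∈ ball (0 : ℂ) 1, ∀ t : ℝ, 0 ≤ t →
      HasDerivWithinAt (fun s : ℝ => F s z) (-(f (F t z))) (Set.Ici (0 : ℝ)) t) := by
  set B : Set ℂ := ball (0 : ℂ) 1 with hBdef
  have hBopen : IsOpen B := isOpen_ball
  have hA : AnalyticOnNhd ℂ h B := hh.analyticOnNhd hBopen
  set g : ℂ → ℂ := Function.invFunOn h B with hgdef
  -- basic facts about g on the image
  have hmem : ∀ w ∈ h '' B, g w ∈ B := by
    rintro w ⟨x, hx, rfl⟩
    exact invFunOn_apply_mem hx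
  have happ : ∀ w ∈ h '' B, h (g w) = w := by
    rintro w ⟨x, hx, rfl⟩
    exact invFunOn_apply_eq hx
  have hgh : ∀ z ∈ B, g (h z) = z := fun z hz =>
    hinj (invFunOn_apply_mem hz) hz (invFunOn_apply_eq hz)
  have hgderiv : ∀ w ∈ h '' B, HasDerivAt g (deriv h (g w))⁻¹ w := by
    rintro w ⟨x, hx, rfl⟩
    have := (aux_invFunOn_hasStrictDerivAt hBopen hA hinj hx).hasDerivAt
    rwa [hgh x hx]
  -- Part 1
  have part1 : ∀ z ∈ B, F 0 z = z := by
    intro z hz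
    rw [hF]
    simpa using hgh z hz
  -- Part 2
  have hFval : ∀ (t : ℝ), 0 ≤ t → ∀ z ∈ B,
      F t z ∈ B ∧ h (F t z) = Complex.exp (-(μ * (t : ℂ))) * h z := by
    intro t ht z hz
    have hw : Complex.exp (-(μ * (t : ℂ))) * h z ∈ h '' B :=
      hspir (h z) ⟨z, hz, rfl⟩ t ht
    rw [hF]
    exact ⟨hmem _ hw, happ _ hw⟩
  have part2 : ∀ t s : ℝ, 0 ≤ t → 0 ≤ s → ∀ z ∈ B, F t (F s z) = F (t + s) z := by
    intro t s ht hs z hz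
    obtain ⟨hFs, hFsval⟩ := hFval s hs z hz
    rw [hF t (F s z), hF (t + s) z, hFsval]
    congr 1
    rw [← mul_assoc, ← Complex.exp_add]
    push_cast
    ring_nf
  -- Part 3
  have part3 : ∀ t : ℝ, 0 ≤ t → Set.MapsTo (F t) B B ∧ DifferentiableOn ℂ (F t) B := by
    intro t ht
    constructor
    · intro z hz
      exact (hFval t ht z hz).1
    · intro z hz
      have hw : Complex.exp (-(μ * (t : ℂ))) * h z ∈ h '' B :=
        hspir (h z) ⟨z, hz, rfl⟩ t ht
      have hhz : DifferentiableAt ℂ h z := (hA z hz).differentiableAt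
      have hinner : DifferentiableAt ℂ (fun z => Complex.exp (-(μ * (t : ℂ))) * h z) z :=
        hhz.const_mul _
      have houter : DifferentiableAt ℂ g (Complex.exp (-(μ * (t : ℂ))) * h z) :=
        (hgderiv _ hw).differentiableAt
      have : DifferentiableAt ℂ (fun z => g (Complex.exp (-(μ * (t : ℂ))) * h z)) z :=
        (houter.comp z hinner :)
      have hFeq : F t = fun z => g (Complex.exp (-(μ * (t : ℂ))) * h z) :=
        funext fun z => hF t z
      rw [hFeq]
      exact this.differentiableWithinAt
  -- Part 4
  have part4 : ∀ z ∈ B, ∀ t : ℝ, 0 ≤ t →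
      HasDerivWithinAt (fun s : ℝ => F s z) (-(f (F t z))) (Set.Ici (0 : ℝ)) t := by
    intro z hz t ht
    set c : ℂ := h z with hcdef
    have hw : Complex.exp (-(μ * (t : ℂ))) * c ∈ h '' B :=
      hspir c ⟨z, hz, rfl⟩ t ht
    set zt : ℂ := g (Complex.exp (-(μ * (t : ℂ))) * c) with hztdef
    have hzt : zt ∈ B := hmem _ hw
    have hhzt : h zt = Complex.exp (-(μ * (t : ℂ))) * c := happ _ hw
    have hdne : deriv h zt ≠ 0 := aux_deriv_ne_zero_of_injOn hBopen hA hinj hzt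
    -- derivative of the inner curve
    have hu : HasDerivAt (fun s : ℝ => Complex.exp (-(μ * (s : ℂ))) * c)
        (Complex.exp (-(μ * (t : ℂ))) * -(μ * 1) * c) t := by
      have he : HasDerivAt (fun w : ℂ => Complex.exp (-(μ * w)))
          (Complex.exp (-(μ * (t : ℂ))) * -(μ * 1)) ((t : ℝ) : ℂ) :=
        (((hasDerivAt_id ((t : ℝ) : ℂ)).const_mul μ).neg).cexp
      exact (he.comp_ofReal).mul_const c
    -- derivative of g at the point
    have hg' : HasDerivAt g (deriv h zt)⁻¹ (Complex.exp (-(μ * (t : ℂ))) * c) :=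
      hgderiv _ hw
    have hFteq : F t z = zt := by rw [hF t z, hztdef]
    have hfval : f zt = (deriv h zt)⁻¹ * (μ * (Complex.exp (-(μ * (t : ℂ))) * c)) := by
      have hode' : deriv h zt * f zt = μ * (Complex.exp (-(μ * (t : ℂ))) * c) := by
        rw [hode zt hzt, hhzt]
      field_simp
      linear_combination hode'
    have hcomp : HasDerivAt (fun s : ℝ => g (Complex.exp (-(μ * (s : ℂ))) * c))
        (-(f zt)) t := by
      have h0 := (hg'.complexToReal_fderiv).comp_hasDerivAt t hu
      have heq2 : ((deriv h zt)⁻¹ • (1 : ℂ →L[ℝ] ℂ))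
          (Complex.exp (-(μ * (t : ℂ))) * -(μ * 1) * c) = -(f zt) := by
        simp only [ContinuousLinearMap.smul_apply, ContinuousLinearMap.one_apply, smul_eq_mul]
        rw [hfval]; ring
      rw [heq2] at h0
      exact h0
    have hfun : (fun s : ℝ => F s z) = fun s : ℝ => g (Complex.exp (-(μ * (s : ℂ))) * c) :=
      funext fun s => hF s z
    rw [hFteq, hfun]
    exact hcomp.hasDerivWithinAt
  exact ⟨part1, part2, part3, part4⟩
end

section
/- Let f(z) = -(1-z)(1+z^2)/(1+z) and F_t(z) = [ (1+z^2)e^{2t} - (1-z)·sqrt( 2(1+z^2)e^{2t} - (1-z)^2 ) ] / [ (1+z^2)e^{2t} - (1-z)^2 ] with a suitable branch of the square root. Then u(t) = F_t(z) solves u'(t) + f(u(t)) = 0 with u(0) = z, for z in the open unit disk and t in a neighborhood of 0. -/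
open Complex Set Metric

private lemma auxFG (A B c : ℂ) (hB2 : B^2 = 2*A - c^2) (hD : A + c*B ≠ 0) :
    (A - c*B)/(A - c^2) = (A - c^2)/(A + c*B) := by
  rcases eq_or_ne (A - c^2) 0 with h | h
  · rw [h, div_zero, zero_div]
  · rw [div_eq_div_iff h hD]
    linear_combination (-c^2) * hB2

theorem stmt19 (f : ℂ → ℂ) (hf : ∀ z, f z = -((1 - z) * (1 + z ^ 2)) / (1 + z))
    (F : ℝ → ℂ → ℂ)
    (hF : ∀ (t : ℝ) (z : ℂ), F t z =
      ((1 + z ^ 2) * Complex.exp (2 * (t : ℂ)) -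
        (1 - z) * ((2 * (1 + z ^ 2) * Complex.exp (2 * (t : ℂ)) - (1 - z) ^ 2) ^ ((1 : ℂ) / 2))) /
      ((1 + z ^ 2) * Complex.exp (2 * (t : ℂ)) - (1 - z) ^ 2)) :
    ∀ z ∈ ball (0 : ℂ) 1, F 0 z = z ∧
      ∃ ε > 0, ∀ t : ℝ, |t| < ε →
        HasDerivAt (fun s : ℝ => F s z) (-(f (F t z))) t := by
  intro z hz
  rw [mem_ball, dist_zero_right] at hz
  have hre : 0 < (1+z).re := by
    have h1 : |z.re| < 1 := lt_of_le_of_lt (Complex.abs_re_le_norm z) hz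
    have := (abs_lt.mp h1).1
    simp only [Complex.add_re, Complex.one_re]
    linarith
  have ha : (1 : ℂ) + z^2 ≠ 0 := by
    intro h
    have h2 : z^2 = -1 := by linear_combination h
    have : ‖z^2‖ = 1 := by rw [h2]; simp
    rw [norm_pow] at this
    nlinarith [norm_nonneg z]
  have hsq0 : ((1+z)^2 : ℂ) ^ ((1:ℂ)/2) = 1 + z := by
    rw [show ((1:ℂ)/2) = ((2:ℂ))⁻¹ by norm_num]
    exact Complex.sq_cpow_two_inv hre
  -- value at 0 of the inner expression
  have hCz : 2*(1+z^2)*Complex.exp (2*((0:ℝ):ℂ)) - (1-z)^2 = (1+z)^2 := by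
    simp only [Complex.ofReal_zero, mul_zero, Complex.exp_zero, mul_one]
    ring
  constructor
  · rw [hF]
    rw [hCz, hsq0]
    simp only [Complex.ofReal_zero, mul_zero, Complex.exp_zero, mul_one]
    rcases eq_or_ne z 0 with rfl | hz0
    · norm_num
    · have hden : (1:ℂ) + z^2 - (1-z)^2 ≠ 0 := by
        intro h
        apply hz0
        have h2z : (2:ℂ)*z = 0 := by linear_combination h
        simpa using h2z
      rw [div_eq_iff hden]
      ring
  -- part 2
  have hslit0 : (2*(1+z^2)*Complex.exp (2*((0:ℝ):ℂ)) - (1-z)^2) ∈ slitPlane := by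
    rw [hCz, Complex.mem_slitPlane_iff]
    rcases eq_or_ne (1+z).im 0 with hi | hi
    · left
      have h : ((1+z)^2).re = (1+z).re*(1+z).re - (1+z).im*(1+z).im := by
        rw [sq, Complex.mul_re]
      rw [h, hi]; nlinarith
    · right
      have h : ((1+z)^2).im = (1+z).re*(1+z).im + (1+z).im*(1+z).re := by
        rw [sq, Complex.mul_im]
      rw [h]
      have hne := mul_ne_zero (ne_of_gt hre) hi
      intro hcon; apply hne; linarith [mul_comm (1+z).re (1+z).im]
  have hB0 : (2*(1+z^2)*Complex.exp (2*((0:ℝ):ℂ)) - (1-z)^2) ^ ((1:ℂ)/2) = 1 + z := by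
    rw [hCz, hsq0]
  have hEc : Continuous fun s : ℝ => Complex.exp (2*(s:ℂ)) := by fun_prop
  have hCc : Continuous (fun s : ℝ => 2*(1+z^2)*Complex.exp (2*(s:ℂ)) - (1-z)^2) := by fun_prop
  have hBcont : ContinuousAt (fun s : ℝ => (2*(1+z^2)*Complex.exp (2*(s:ℂ)) - (1-z)^2) ^ ((1:ℂ)/2)) 0 :=
    ContinuousAt.cpow hCc.continuousAt continuousAt_const hslit0
  have e1 : ∀ᶠ s : ℝ in nhds 0, (2*(1+z^2)*Complex.exp (2*(s:ℂ)) - (1-z)^2) ∈ slitPlane :=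
    hCc.continuousAt.eventually_mem (isOpen_slitPlane.mem_nhds hslit0)
  have e2 : ∀ᶠ s : ℝ in nhds 0,
      (2*(1+z^2)*Complex.exp (2*(s:ℂ)) - (1-z)^2) ^ ((1:ℂ)/2) + (1-z) ≠ 0 := by
    apply (hBcont.add continuousAt_const).eventually_ne
    show (2*(1+z^2)*Complex.exp (2*((0:ℝ):ℂ)) - (1-z)^2) ^ ((1:ℂ)/2) + (1-z) ≠ 0
    rw [hB0]
    intro h
    have h2 : (2:ℂ) = 0 := by linear_combination h
    norm_num at h2
  have e3 : ∀ᶠ s : ℝ in nhds 0,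
      (1+z^2)*Complex.exp (2*(s:ℂ)) + (1-z) * ((2*(1+z^2)*Complex.exp (2*(s:ℂ)) - (1-z)^2) ^ ((1:ℂ)/2)) ≠ 0 := by
    apply ContinuousAt.eventually_ne ((continuousAt_const.mul hEc.continuousAt).add (continuousAt_const.mul hBcont))
    show (1+z^2)*Complex.exp (2*((0:ℝ):ℂ)) + (1-z) * ((2*(1+z^2)*Complex.exp (2*((0:ℝ):ℂ)) - (1-z)^2) ^ ((1:ℂ)/2)) ≠ 0
    rw [hB0]
    simp only [Complex.ofReal_zero, mul_zero, Complex.exp_zero, mul_one]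
    intro h
    have h2 : (2:ℂ) = 0 := by linear_combination h
    norm_num at h2
  obtain ⟨ε, hε0, hεP⟩ := Metric.eventually_nhds_iff.mp ((e1.and e2).and e3)
  refine ⟨ε, hε0, fun t ht => ?_⟩
  have hd : ∀ s : ℝ, |s| < ε →
      ((2*(1+z^2)*Complex.exp (2*(s:ℂ)) - (1-z)^2) ∈ slitPlane ∧
        (2*(1+z^2)*Complex.exp (2*(s:ℂ)) - (1-z)^2) ^ ((1:ℂ)/2) + (1-z) ≠ 0) ∧
      (1+z^2)*Complex.exp (2*(s:ℂ)) + (1-z) * ((2*(1+z^2)*Complex.exp (2*(s:ℂ)) - (1-z)^2) ^ ((1:ℂ)/2)) ≠ 0 := by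
    intro s hs
    exact hεP (by rwa [Real.dist_eq, sub_zero])
  obtain ⟨⟨hslit, hBc⟩, hDne⟩ := hd t ht
  -- B squared
  have hB2gen : ∀ s : ℝ, (2*(1+z^2)*Complex.exp (2*(s:ℂ)) - (1-z)^2) ∈ slitPlane →
      ((2*(1+z^2)*Complex.exp (2*(s:ℂ)) - (1-z)^2) ^ ((1:ℂ)/2))^2
        = 2*(1+z^2)*Complex.exp (2*(s:ℂ)) - (1-z)^2 := by
    intro s hs
    rw [sq, ← Complex.cpow_add _ _ (Complex.slitPlane_ne_zero hs)]
    norm_num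
  -- F equals G for |s| < ε
  have hFG : ∀ s : ℝ, |s| < ε → F s z =
      ((1+z^2)*Complex.exp (2*(s:ℂ)) - (1-z)^2) /
        ((1+z^2)*Complex.exp (2*(s:ℂ)) + (1-z) * ((2*(1+z^2)*Complex.exp (2*(s:ℂ)) - (1-z)^2) ^ ((1:ℂ)/2))) := by
    intro s hs
    obtain ⟨⟨hs1, hs2⟩, hs3⟩ := hd s hs
    rw [hF]
    exact auxFG _ _ _ (by linear_combination hB2gen s hs1) hs3
  -- derivatives
  have hRe : HasDerivAt (fun s : ℝ => ((s : ℂ))) 1 t := by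
    exact Complex.ofRealCLM.hasDerivAt
  have h2s : HasDerivAt (fun s : ℝ => 2*(s:ℂ)) 2 t := by
    simpa using hRe.const_mul (2:ℂ)
  have hE : HasDerivAt (fun s : ℝ => Complex.exp (2*(s:ℂ))) (Complex.exp (2*(t:ℂ)) * 2) t :=
    h2s.cexp
  have hA : HasDerivAt (fun s : ℝ => (1+z^2)*Complex.exp (2*(s:ℂ)))
      ((1+z^2)*(Complex.exp (2*(t:ℂ))*2)) t := hE.const_mul _
  have hN : HasDerivAt (fun s : ℝ => (1+z^2)*Complex.exp (2*(s:ℂ)) - (1-z)^2)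
      ((1+z^2)*(Complex.exp (2*(t:ℂ))*2)) t := hA.sub_const _
  have hC : HasDerivAt (fun s : ℝ => 2*(1+z^2)*Complex.exp (2*(s:ℂ)) - (1-z)^2)
      (2*(1+z^2)*(Complex.exp (2*(t:ℂ))*2)) t :=
    (hE.const_mul (2*(1+z^2))).sub_const ((1-z)^2)
  have hBd : HasDerivAt (fun s : ℝ => (2*(1+z^2)*Complex.exp (2*(s:ℂ)) - (1-z)^2) ^ ((1:ℂ)/2))
      (((1:ℂ)/2) * (2*(1+z^2)*Complex.exp (2*(t:ℂ)) - (1-z)^2) ^ ((1:ℂ)/2 - 1)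
        * (2*(1+z^2)*(Complex.exp (2*(t:ℂ))*2))) t := by
    have := (Complex.hasStrictDerivAt_cpow_const (c := (1:ℂ)/2) hslit).hasDerivAt.comp t hC
    exact this
  have hDen : HasDerivAt (fun s : ℝ => (1+z^2)*Complex.exp (2*(s:ℂ))
        + (1-z) * ((2*(1+z^2)*Complex.exp (2*(s:ℂ)) - (1-z)^2) ^ ((1:ℂ)/2)))
      ((1+z^2)*(Complex.exp (2*(t:ℂ))*2)
        + (1-z) * (((1:ℂ)/2) * (2*(1+z^2)*Complex.exp (2*(t:ℂ)) - (1-z)^2) ^ ((1:ℂ)/2 - 1)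
          * (2*(1+z^2)*(Complex.exp (2*(t:ℂ))*2)))) t :=
    hA.add (hBd.const_mul _)
  have hG := hN.div hDen hDne
  have hev' : ∀ᶠ s : ℝ in nhds t, |s| < ε :=
    (isOpen_lt _root_.continuous_abs continuous_const).eventually_mem ht
  have hFt := hG.congr_of_eventuallyEq (Filter.eventually_of_mem hev' (fun s hs => hFG s hs))
  refine hFt.congr_deriv (Eq.symm ?_)
  have hFGt := hFG t ht
  set E := Complex.exp (2*(t:ℂ)) with hEdef
  set B := (2*(1+z^2)*E - (1-z)^2) ^ ((1:ℂ)/2) with hBdef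
  have hB2 : B^2 = 2*(1+z^2)*E - (1-z)^2 := hB2gen t hslit
  have hBne : B ≠ 0 := by
    intro h
    apply Complex.slitPlane_ne_zero hslit
    rw [← hB2, h]
    ring
  have hpow : (2*(1+z^2)*E - (1-z)^2) ^ ((1:ℂ)/2 - 1) = B⁻¹ := by
    rw [show ((1:ℂ)/2 - 1) = -(1/2) by norm_num, Complex.cpow_neg, hBdef]
  have h1u : 1 + ((1+z^2)*E - (1-z)^2)/((1+z^2)*E + (1-z)*B)
      = B*(B+(1-z))/((1+z^2)*E + (1-z)*B) := by
    field_simp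
    linear_combination -hB2
  have h1une : 1 + ((1+z^2)*E - (1-z)^2)/((1+z^2)*E + (1-z)*B) ≠ 0 := by
    rw [h1u]; exact div_ne_zero (mul_ne_zero hBne hBc) hDne
  have h2 : 1 - ((1+z^2)*E - (1-z)^2)/((1+z^2)*E + (1-z)*B)
      = (1-z)*(B+(1-z))/((1+z^2)*E + (1-z)*B) := by
    field_simp
    ring
  have h3 : 1 + (((1+z^2)*E - (1-z)^2)/((1+z^2)*E + (1-z)*B))^2
      = 2*((1+z^2)*E)/((1+z^2)*E + (1-z)*B) := by
    rw [div_pow, one_add_div (pow_ne_zero 2 hDne), div_eq_div_iff (pow_ne_zero 2 hDne) hDne]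
    linear_combination ((1-z)^2*((1+z^2)*E + (1-z)*B)) * hB2
  rw [hf, hFGt, hpow]
  simp only [neg_div, neg_neg]
  rw [h2, h3, h1u]
  field_simp
  linear_combination (-(1-z)*E) * hB2
end
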